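/- In the group K_n = ⟨x₁, …, xₙ | x₁² = x₂² = … = xₙ²⟩ (n ≥ 2), every element can be written uniquely in the normal form x_{i₁}⋯x_{i_k}·xₙ^z where consecutive indices i_u, i_{u+1} are distinct, i_k ≠ n, and z ∈ ℤ. -/

import Mathlib

/-- Relators of `K_n = ⟨x₁, …, xₙ ∣ x₁² = x₂² = … = xₙ²⟩`. -/
def KnRels (n : ℕ) : Set (FreeGroup (Fin n)) :=
  { w | ∃ i j : Fin n, w = (FreeGroup.of i) ^ 2 * ((FreeGroup.of j) ^ 2)⁻¹ }

/-- The group `K_n`, the free product of `n` infinite cyclic groups amalgamated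
along the squares of the generators. -/
abbrev KnGroup (n : ℕ) : Type := PresentedGroup (KnRels n)

namespace KnNF

variable {n : ℕ}

/-- Validity predicate for normal forms: the list is alternating (consecutive entries
distinct) and does not end with the distinguished generator `ℓ`. -/
def Valid (ℓ : Fin n) (p : List (Fin n) × ℤ) : Prop :=
  List.Chain' (· ≠ ·) p.1 ∧ p.1.getLast? ≠ some ℓ

/-- The set of normal forms. -/
abbrev S (ℓ : Fin n) := { p : List (Fin n) × ℤ // Valid ℓ p }

/-- Realization of a normal form as a group element. -/
def realize (ℓ : Fin n) (p : List (Fin n) × ℤ) : KnGroup n :=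
  (p.1.map fun i => (PresentedGroup.of i : KnGroup n)).prod *
    (PresentedGroup.of ℓ : KnGroup n) ^ p.2

lemma sq_eq (i j : Fin n) :
    (PresentedGroup.of i : KnGroup n) ^ 2 = (PresentedGroup.of j : KnGroup n) ^ 2 := by
  have h : ((FreeGroup.of i) ^ 2 * ((FreeGroup.of j) ^ 2)⁻¹ : FreeGroup (Fin n)) ∈
      Subgroup.normalClosure (KnRels n) :=
    Subgroup.subset_normalClosure ⟨i, j, rfl⟩
  have h1 : (PresentedGroup.mk (KnRels n)) ((FreeGroup.of i) ^ 2 * ((FreeGroup.of j) ^ 2)⁻¹)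
      = 1 := (QuotientGroup.eq_one_iff _).mpr h
  rw [map_mul, map_inv, map_pow, map_pow, mul_inv_eq_one] at h1
  exact h1

lemma commute_sq (ℓ : Fin n) (x : KnGroup n) :
    Commute ((PresentedGroup.of ℓ : KnGroup n) ^ 2) x := by
  have : x ∈ Subgroup.centralizer {(PresentedGroup.of ℓ : KnGroup n) ^ 2} := by
    refine PresentedGroup.generated_by _ _ (fun j => ?_) x
    rw [Subgroup.mem_centralizer_iff]
    rintro g rfl
    have h1 : (PresentedGroup.of ℓ : KnGroup n) ^ 2 = PresentedGroup.of j ^ 2 := sq_eq ℓ j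
    rw [h1]
    group
  exact Subgroup.mem_centralizer_iff.mp this _ rfl

/-- Left multiplication by the generator `j` on normal forms. -/
def bj (ℓ : Fin n) (j : Fin n) : List (Fin n) × ℤ → List (Fin n) × ℤ
  | (i :: L, z) => if j = i then (L, z + 2) else (j :: i :: L, z)
  | ([], z) => if j = ℓ then ([], z + 1) else ([j], z)

lemma valid_bj (ℓ j : Fin n) (p : List (Fin n) × ℤ) (hp : Valid ℓ p) : Valid ℓ (bj ℓ j p) := by
  obtain ⟨L, z⟩ := p
  obtain ⟨hc, hl⟩ := hp
  match L with
  | [] =>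
    by_cases hj : j = ℓ
    · simp [bj, hj, Valid, List.Chain']
    · simp only [bj, if_neg hj]
      exact ⟨List.isChain_singleton j, by simpa using hj⟩
  | i :: L' =>
    by_cases hj : j = i
    · subst hj
      simp only [bj, if_pos rfl]
      constructor
      · exact (List.isChain_cons.mp hc).2
      · match L' with
        | [] => simp [Valid]
        | m :: L'' =>
          simpa [Valid, List.getLast?_cons_cons] using hl
    · simp only [bj, if_neg hj]
      refine ⟨List.isChain_cons_cons.mpr ⟨hj, hc⟩, ?_⟩
      simpa [Valid, List.getLast?_cons_cons] using hl

lemma bj_shift (ℓ j : Fin n) (p : List (Fin n) × ℤ) (c : ℤ) :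
    bj ℓ j (p.1, p.2 + c) = ((bj ℓ j p).1, (bj ℓ j p).2 + c) := by
  obtain ⟨L, z⟩ := p
  match L with
  | [] => by_cases hj : j = ℓ <;> simp [bj, hj] <;> ring
  | i :: L' => by_cases hj : j = i <;> simp [bj, hj] <;> ring

lemma bj_bj (ℓ j : Fin n) (p : List (Fin n) × ℤ) (hp : Valid ℓ p) :
    bj ℓ j (bj ℓ j p) = (p.1, p.2 + 2) := by
  obtain ⟨L, z⟩ := p
  match L with
  | [] =>
    by_cases hj : j = ℓ
    · simp [bj, hj]; ring
    · simp [bj, hj]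
  | i :: L' =>
    by_cases hj : j = i
    · subst hj
      have hb : bj ℓ j (j :: L', z) = (L', z + 2) := by simp [bj]
      rw [hb]
      match L' with
      | [] =>
        have hjl : j ≠ ℓ := by
          intro h; exact hp.2 (by simp [h])
        simp [bj, hjl]
      | m :: L'' =>
        have hjm : j ≠ m := List.isChain_cons_cons.mp hp.1 |>.1
        simp [bj, hjm]
    · simp [bj, hj]

lemma realize_cons (ℓ : Fin n) (i : Fin n) (L : List (Fin n)) (z : ℤ) :
    realize ℓ (i :: L, z) = PresentedGroup.of i * realize ℓ (L, z) := by
  simp [realize, mul_assoc]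

lemma realize_nil (ℓ : Fin n) (z : ℤ) :
    realize ℓ ([], z) = (PresentedGroup.of ℓ : KnGroup n) ^ z := by
  simp [realize]

lemma realize_bj (ℓ j : Fin n) (p : List (Fin n) × ℤ) :
    realize ℓ (bj ℓ j p) = PresentedGroup.of j * realize ℓ p := by
  obtain ⟨L, z⟩ := p
  match L with
  | [] =>
    by_cases hj : j = ℓ
    · have hb : bj ℓ j ([], z) = ([], z + 1) := by simp [bj, hj]
      rw [hb, hj, realize_nil, realize_nil, zpow_add_one]
      exact ((Commute.refl _).zpow_right z).symm
    · have hb : bj ℓ j ([], z) = ([j], z) := by simp [bj, hj]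
      rw [hb, realize_cons]
  | i :: L' =>
    by_cases hj : j = i
    · have hb : bj ℓ j (i :: L', z) = (L', z + 2) := by simp [bj, hj]
      rw [hb, hj, realize_cons]
      simp only [realize]
      rw [← mul_assoc, ← mul_assoc, ← sq]
      have hc : Commute ((PresentedGroup.of i : KnGroup n) ^ 2)
          ((L'.map fun k => (PresentedGroup.of k : KnGroup n)).prod) := by
        rw [sq_eq i ℓ]; exact commute_sq ℓ _
      rw [hc.eq, mul_assoc]
      congr 1
      rw [sq_eq i ℓ]
      group
    · have hb : bj ℓ j (i :: L', z) = (j :: i :: L', z) := by simp [bj, hj]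
      rw [hb, realize_cons]

/-- The shift-by-two permutation of normal forms. -/
def shiftE (ℓ : Fin n) : Equiv.Perm (S ℓ) where
  toFun s := ⟨(s.1.1, s.1.2 + 2), s.2⟩
  invFun s := ⟨(s.1.1, s.1.2 - 2), s.2⟩
  left_inv s := by ext <;> simp
  right_inv s := by ext <;> simp

/-- The permutation of normal forms given by left multiplication by generator `j`. -/
def permj (ℓ : Fin n) (j : Fin n) : Equiv.Perm (S ℓ) where
  toFun s := ⟨bj ℓ j s.1, valid_bj ℓ j s.1 s.2⟩
  invFun s := ⟨((bj ℓ j s.1).1, (bj ℓ j s.1).2 - 2),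
    valid_bj ℓ j s.1 s.2⟩
  left_inv s := by
    apply Subtype.ext
    show ((bj ℓ j (bj ℓ j s.1)).1, (bj ℓ j (bj ℓ j s.1)).2 - 2) = s.1
    rw [bj_bj ℓ j s.1 s.2]
    simp
  right_inv s := by
    apply Subtype.ext
    show bj ℓ j ((bj ℓ j s.1).1, (bj ℓ j s.1).2 - 2) = s.1
    have h1 := bj_shift ℓ j (bj ℓ j s.1) (-2)
    have h2 := bj_bj ℓ j s.1 s.2
    simp only [sub_eq_add_neg]
    rw [h1, h2]
    simp

lemma permj_sq (ℓ j : Fin n) : permj ℓ j * permj ℓ j = shiftE ℓ := by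
  apply Equiv.ext
  intro s
  apply Subtype.ext
  show bj ℓ j (bj ℓ j s.1) = (s.1.1, s.1.2 + 2)
  exact bj_bj ℓ j s.1 s.2

lemma rels_ok (ℓ : Fin n) : ∀ r ∈ KnRels n, FreeGroup.lift (permj ℓ) r = 1 := by
  rintro r ⟨i, j, rfl⟩
  rw [map_mul, map_inv, map_pow, map_pow, mul_inv_eq_one, FreeGroup.lift_apply_of, FreeGroup.lift_apply_of]
  rw [sq, sq, permj_sq, permj_sq]

/-- The action of `K_n` on normal forms. -/
def F (ℓ : Fin n) : KnGroup n →* Equiv.Perm (S ℓ) :=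
  PresentedGroup.toGroup (rels_ok ℓ)

lemma F_of (ℓ j : Fin n) : F ℓ (PresentedGroup.of j) = permj ℓ j :=
  PresentedGroup.toGroup.of _

lemma F_realize_inv (ℓ : Fin n) (g : KnGroup n) :
    ∀ s : S ℓ, realize ℓ ((F ℓ g) s).1 = g * realize ℓ s.1 := by
  induction g using PresentedGroup.induction_on with
  | H z =>
    induction z using FreeGroup.induction_on with
    | C1 =>
      intro s
      simp only [map_one]
      simp
    | of x =>
      intro s
      have h0 : PresentedGroup.mk (KnRels n) (FreeGroup.of x) = PresentedGroup.of x := rfl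
      rw [h0, F_of]
      show realize ℓ (bj ℓ x s.1) = _
      rw [realize_bj]
    | inv_of x _ =>
      intro s
      have hxg : PresentedGroup.mk (KnRels n) (FreeGroup.of x)⁻¹ =
          (PresentedGroup.of x : KnGroup n)⁻¹ := by
        rw [map_inv]; rfl
      rw [hxg, map_inv]
      set s' : S ℓ := (F ℓ (PresentedGroup.of x))⁻¹ s with hs'
      have key : realize ℓ ((F ℓ (PresentedGroup.of x)) s').1
          = PresentedGroup.of x * realize ℓ s'.1 := by
        rw [F_of]
        show realize ℓ (bj ℓ x s'.1) = _
        rw [realize_bj]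
      have h2 : (F ℓ (PresentedGroup.of x)) s' = s := by
        rw [hs']; simp
      rw [h2] at key
      rw [eq_inv_mul_iff_mul_eq, ← key]
    | mul a b ha hb =>
      intro s
      rw [map_mul, map_mul]
      show realize ℓ ((F ℓ (PresentedGroup.mk (KnRels n) a))
          ((F ℓ (PresentedGroup.mk (KnRels n) b)) s)).1 = _
      rw [ha, hb, mul_assoc]

/-- The base normal form. -/
def e0 (ℓ : Fin n) : S ℓ := ⟨([], 0), ⟨List.isChain_nil, by simp⟩⟩

lemma F_pow (ℓ : Fin n) (z : ℤ) :
    ((F ℓ ((PresentedGroup.of ℓ : KnGroup n) ^ z)) (e0 ℓ)).1 = ([], z) := by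
  induction z using Int.induction_on with
  | zero => simp [e0]
  | succ k ih =>
    have : ((PresentedGroup.of ℓ : KnGroup n)) ^ ((k : ℤ) + 1)
        = PresentedGroup.of ℓ * (PresentedGroup.of ℓ : KnGroup n) ^ (k : ℤ) := by
      rw [add_comm ((k : ℤ)) 1, zpow_one_add]
    rw [this, map_mul]
    show ((F ℓ (PresentedGroup.of ℓ)) ((F ℓ _) (e0 ℓ))).1 = _
    rw [F_of]
    show bj ℓ ℓ ((F ℓ ((PresentedGroup.of ℓ : KnGroup n) ^ (k : ℤ))) (e0 ℓ)).1 = _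
    rw [ih]
    simp [bj]
  | pred k ih =>
    have : ((PresentedGroup.of ℓ : KnGroup n)) ^ (-(k : ℤ) - 1)
        = (PresentedGroup.of ℓ)⁻¹ * (PresentedGroup.of ℓ : KnGroup n) ^ (-(k : ℤ)) := by
      rw [show -(k : ℤ) - 1 = -1 + -(k : ℤ) by ring, zpow_add, zpow_neg_one]
    rw [this, map_mul, map_inv]
    show (((F ℓ (PresentedGroup.of ℓ))⁻¹) ((F ℓ _) (e0 ℓ))).1 = _
    rw [F_of]
    have hval : ((F ℓ ((PresentedGroup.of ℓ : KnGroup n) ^ (-(k : ℤ)))) (e0 ℓ)) =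
        ⟨([], -(k : ℤ)), ⟨List.isChain_nil, by simp⟩⟩ := Subtype.ext (by rw [ih])
    rw [hval]
    show (((bj ℓ ℓ ([], -(k:ℤ))).1, (bj ℓ ℓ ([], -(k:ℤ))).2 - 2)) = _
    simp [bj]
    ring

lemma F_realize (ℓ : Fin n) (p : List (Fin n) × ℤ) (hp : Valid ℓ p) :
    ((F ℓ (realize ℓ p)) (e0 ℓ)).1 = p := by
  obtain ⟨L, z⟩ := p
  induction L with
  | nil => rw [realize_nil]; exact F_pow ℓ z
  | cons i L' ih =>
    have hp' : Valid ℓ (L', z) := by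
      refine ⟨(List.isChain_cons.mp hp.1).2, ?_⟩
      match L' with
      | [] => simp [Valid]
      | m :: L'' => simpa [List.getLast?_cons_cons] using hp.2
    rw [realize_cons, map_mul]
    show ((F ℓ (PresentedGroup.of i)) ((F ℓ (realize ℓ (L', z))) (e0 ℓ))).1 = _
    rw [F_of]
    have hval : (F ℓ (realize ℓ (L', z))) (e0 ℓ) = ⟨(L', z), hp'⟩ :=
      Subtype.ext (ih hp')
    rw [hval]
    show bj ℓ i (L', z) = (i :: L', z)
    match L' with
    | [] =>
      have : i ≠ ℓ := by intro h; exact hp.2 (by simp [h])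
      simp [bj, this]
    | m :: L'' =>
      have : i ≠ m := (List.isChain_cons_cons.mp hp.1).1
      simp [bj, this]

end KnNF

/-- Every element of `K_n` (`n ≥ 2`) has a unique normal form
`x_{i₁} ⋯ x_{i_k} · xₙ^z` with consecutive indices distinct, `i_k ≠ n`, `z ∈ ℤ`. -/
theorem Kn_normal_form (n : ℕ) (hn : 2 ≤ n) (g : KnGroup n) :
    ∃! p : List (Fin n) × ℤ,
      List.Chain' (· ≠ ·) p.1 ∧
      p.1.getLast? ≠ some (⟨n - 1, by omega⟩ : Fin n) ∧
      g = (p.1.map fun i => (PresentedGroup.of i : KnGroup n)).prod *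
            (PresentedGroup.of (⟨n - 1, by omega⟩ : Fin n) : KnGroup n) ^ p.2 := by
  classical
  set ℓ : Fin n := ⟨n - 1, by omega⟩ with hℓ
  set s : KnNF.S ℓ := (KnNF.F ℓ g) (KnNF.e0 ℓ) with hs
  have hreal : KnNF.realize ℓ s.1 = g := by
    have := KnNF.F_realize_inv ℓ g (KnNF.e0 ℓ)
    rw [← hs] at this
    simpa [KnNF.realize, KnNF.e0] using this
  refine ⟨s.1, ⟨s.2.1, s.2.2, ?_⟩, ?_⟩
  · rw [← hreal]; rfl
  · rintro q ⟨hq1, hq2, hq3⟩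
    have hq : KnNF.Valid ℓ q := ⟨hq1, hq2⟩
    have : KnNF.realize ℓ q = g := by rw [hq3]; rfl
    have h2 : ((KnNF.F ℓ g) (KnNF.e0 ℓ)).1 = q := by
      rw [← this]; exact KnNF.F_realize ℓ q hq
    rw [← hs] at h2
    exact h2.symm
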